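/- arXiv:1608.07255 — 2 statements merged into one kernel-verified Lean document; each statement's English description precedes it below -/
import Mathlib

section
/- Let G be an acyclic directed graph, φ : G → (Γ, ≺) a CPP-extension of G, and ≺_G the linear order on E(G) induced from ≺ via φ1 (e1 ≺_G e2 iff φ1(e1) ≺ φ1(e2)). For any edge e of G with e' = φ1(e): (1) e = I(t(e))^- in (G, ≺_G) iff e' = I(t(e'))^- in (Γ, ≺); (2) e = I(t(e))^+ in (G, ≺_G) iff e' = I(t(e'))^+ in (Γ, ≺); (3) e = O(s(e))^- in (G, ≺_G) iff e' = O(s(e'))^- in (Γ, ≺); (4) e = O(s(e))^+ in (G, ≺_G) iff e' = O(s(e'))^+ in (Γ, ≺). -/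
variable {V E : Type}

/-- Edge reachability `e1 → e2`: a directed path of edges `f_0, …, f_k` with `k ≥ 1`,
`f_0 = e1`, `f_k = e2` and `t f_{i-1} = s f_i`. -/
def eReach (s t : E → V) : E → E → Prop :=
  Relation.TransGen (fun a b => t a = s b)

/-- Vertex reachability `v → w`: a directed path from `v` to `w` using at least one edge. -/
def vReach (s t : E → V) : V → V → Prop :=
  Relation.TransGen (fun v w => ∃ e, s e = v ∧ t e = w)

/-- A directed graph is acyclic if no vertex reaches itself. -/
def Acyclic (s t : E → V) : Prop := ∀ v, ¬ vReach s t v v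

/-- `I(v)`: incoming edges of `v`. -/
def inE (t : E → V) (v : V) : Set E := {e | t e = v}

/-- `O(v)`: outgoing edges of `v`. -/
def outE (s : E → V) (v : V) : Set E := {e | s e = v}

/-- Convex hull `X̄` of `X` in the linear order `le`: the interval `{y | X^- ≤ y ≤ X^+}`
(empty when `X` is empty). -/
def hull (le : E → E → Prop) (X : Set E) : Set E :=
  {y | ∃ a ∈ X, ∃ b ∈ X, le a y ∧ le y b}

/-- The strict order associated to a linear order `le`. -/
def ltOf (le : E → E → Prop) (a b : E) : Prop := le a b ∧ a ≠ b

/-- A source: no incoming edges. -/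
def IsSource (t : E → V) (v : V) : Prop := inE t v = ∅

/-- A sink: no outgoing edges. -/
def IsSink (s : E → V) (v : V) : Prop := outE s v = ∅

/-- A progressive graph: acyclic and every source and every sink has degree 1. -/
def Progressive (s t : E → V) : Prop :=
  Acyclic s t ∧
  ∀ v, (IsSource t v ∨ IsSink s v) → ({e | s e = v ∨ t e = v} : Set E).ncard = 1

/-- `I(G)`: input edges, those whose source vertex is a source of `G`. -/
def inputE (s t : E → V) : Set E := {e | IsSource t (s e)}

/-- `O(G)`: output edges, those whose target vertex is a sink of `G`. -/
def outputE (s t : E → V) : Set E := {e | IsSink s (t e)}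

/-- Condition (U1) = (P1): `e1 → e2` implies `e1 ≺ e2`. -/
def U1 (s t : E → V) (le : E → E → Prop) : Prop :=
  ∀ e1 e2, eReach s t e1 e2 → ltOf le e1 e2

/-- Condition (U2): for every vertex `v`, `Ī(v) ∩ Ō(v) = ∅` and `Ē(v) = Ī(v) ∪ Ō(v)`. -/
def U2 (s t : E → V) (le : E → E → Prop) : Prop :=
  ∀ v, hull le (inE t v) ∩ hull le (outE s v) = ∅ ∧
    hull le (inE t v ∪ outE s v) = hull le (inE t v) ∪ hull le (outE s v)

/-- Condition (U3). -/
def U3 (s t : E → V) (le : E → E → Prop) : Prop :=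
  ∀ v1 v2,
    ((inE t v1 ∩ hull le (inE t v2)).Nonempty →
      hull le (inE t v1) ⊆ hull le (inE t v2)) ∧
    ((outE s v1 ∩ hull le (outE s v2)).Nonempty →
      hull le (outE s v1) ⊆ hull le (outE s v2))

/-- Condition (U4): for every progressive vertex `v`, `I(G) ∩ Ō(v) = ∅` and `O(G) ∩ Ī(v) = ∅`. -/
def U4 (s t : E → V) (le : E → E → Prop) : Prop :=
  ∀ v, ¬ IsSource t v → ¬ IsSink s v →
    inputE s t ∩ hull le (outE s v) = ∅ ∧ outputE s t ∩ hull le (inE t v) = ∅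

/-- An upward planar order: a linear order on the edges satisfying (U1), (U2), (U3). -/
def IsUPO (s t : E → V) (le : E → E → Prop) : Prop :=
  IsLinearOrder E le ∧ U1 s t le ∧ U2 s t le ∧ U3 s t le

/-- Condition (P2). -/
def P2 (s t : E → V) (le : E → E → Prop) : Prop :=
  ∀ e1 e2 e3, ltOf le e1 e2 → ltOf le e2 e3 → eReach s t e1 e3 →
    eReach s t e1 e2 ∨ eReach s t e2 e3

/-- Condition (P̃2). -/
def P2t (s t : E → V) (le : E → E → Prop) : Prop :=
  ∀ e1 e2 e3, ltOf le e1 e2 → ltOf le e2 e3 → t e1 = s e3 →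
    eReach s t e1 e2 ∨ eReach s t e2 e3

/-- Condition (P3) (for distinct vertices). -/
def P3 (s t : E → V) (le : E → E → Prop) : Prop :=
  ∀ v1 v2, v1 ≠ v2 →
    ((inE t v1 ∩ hull le (inE t v2)).Nonempty → vReach s t v1 v2) ∧
    ((outE s v1 ∩ hull le (outE s v2)).Nonempty → vReach s t v2 v1)

/-- Condition (A): for distinct `v1 v2`, `∅ ≠ Ī(v1) ⊆ Ī(v2)` implies `v1 → v2`,
and `∅ ≠ Ō(v1) ⊆ Ō(v2)` implies `v2 → v1`. -/
def CondA (s t : E → V) (le : E → E → Prop) : Prop :=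
  ∀ v1 v2, v1 ≠ v2 →
    ((hull le (inE t v1)).Nonempty → hull le (inE t v1) ⊆ hull le (inE t v2) →
      vReach s t v1 v2) ∧
    ((hull le (outE s v1)).Nonempty → hull le (outE s v1) ⊆ hull le (outE s v2) →
      vReach s t v2 v1)

/-- A POP-graph: a progressive graph with a planar order ((P1) and (P2)). -/
def IsPOP (s t : E → V) (le : E → E → Prop) : Prop :=
  Progressive s t ∧ IsLinearOrder E le ∧ U1 s t le ∧ P2 s t le

/-- `U(v) = {w | Ō(v) ⊊ Ō(w)}` when `O(v) ≠ ∅`, and `U(v) = ∅` otherwise. -/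
def Uset (s : E → V) (le : E → E → Prop) (v : V) : Set V :=
  {w | (outE s v).Nonempty ∧ hull le (outE s v) ⊂ hull le (outE s w)}

/-- `D(v) = {w | Ī(v) ⊊ Ī(w)}` when `I(v) ≠ ∅`, and `D(v) = ∅` otherwise. -/
def Dset (t : E → V) (le : E → E → Prop) (v : V) : Set V :=
  {w | (inE t v).Nonempty ∧ hull le (inE t v) ⊂ hull le (inE t w)}

/-- A CPP-extension of `G = (s, t)`: a POP-graph `(s', t', le')` with an embedding
`(φ0, φ1)` satisfying (E1)–(E4). -/
def IsCPP {V' E' : Type} (s t : E → V) (s' t' : E' → V')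
    (le' : E' → E' → Prop) (φ0 : V → V') (φ1 : E → E') : Prop :=
  Function.Injective φ0 ∧ Function.Injective φ1 ∧
  (∀ e, s' (φ1 e) = φ0 (s e)) ∧ (∀ e, t' (φ1 e) = φ0 (t e)) ∧
  IsPOP s' t' le' ∧
  -- (E1)
  Set.range φ0 = {v : V' | ¬ IsSource t' v ∧ ¬ IsSink s' v} ∧
  -- (E2)
  Nat.card E' = Nat.card E + ({v : V | IsSource t v}).ncard + ({v : V | IsSink s v}).ncard ∧
  -- (E3)
  (∀ v w, IsSource t v → IsSink s w → inE t' (φ0 v) ∩ outE s' (φ0 w) = ∅) ∧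
  -- (E4)
  (∀ e' : E', e' ∉ Set.range φ1 → e' ∉ inputE s' t' → e' ∉ outputE s' t' →
    ((∃ a ∈ outE s' (s' e'), ltOf le' a e') ∧ (∃ b ∈ outE s' (s' e'), ltOf le' e' b)) ∨
    ((∃ a ∈ inE t' (t' e'), ltOf le' a e') ∧ (∃ b ∈ inE t' (t' e'), ltOf le' e' b)))
lemma finset_exists_min' {α : Type} (r : α → α → Prop) (h : IsLinearOrder α r) :
    ∀ s : Finset α, s.Nonempty → ∃ m ∈ s, ∀ x ∈ s, r m x := by
  haveI := h
  classical
  intro s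
  induction s using Finset.induction_on with
  | empty => rintro ⟨x, hx⟩; simp at hx
  | insert a s' ha ih =>
    intro _
    by_cases hs : s'.Nonempty
    · obtain ⟨m, hm, hmin⟩ := ih hs
      rcases total_of r a m with hc | hc
      · refine ⟨a, Finset.mem_insert_self a s', ?_⟩
        intro x hx
        rcases Finset.mem_insert.mp hx with rfl | hx
        · exact refl_of r x
        · exact trans_of r hc (hmin x hx)
      · refine ⟨m, Finset.mem_insert_of_mem hm, ?_⟩
        intro x hx
        rcases Finset.mem_insert.mp hx with rfl | hx
        · exact hc
        · exact hmin x hx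
    · have hempty : s' = ∅ := Finset.not_nonempty_iff_eq_empty.mp hs
      subst hempty
      refine ⟨a, by simp, ?_⟩
      intro x hx
      simp only [Finset.mem_insert, Finset.notMem_empty, or_false] at hx
      subst hx
      exact refl_of r x

lemma finset_exists_max' {α : Type} (r : α → α → Prop) (h : IsLinearOrder α r) :
    ∀ s : Finset α, s.Nonempty → ∃ m ∈ s, ∀ x ∈ s, r x m :=
  finset_exists_min' (Function.swap r) (by haveI := h; exact { refl := fun a => refl_of r a, trans := fun a b c h1 h2 => trans_of r h2 h1, antisymm := fun a b h1 h2 => antisymm h2 h1, total := fun a b => total_of r b a })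


/-- a CPP-extension preserves the properties of being the minimum/maximum
incoming/outgoing edge (the order on `E(G)` being induced via `φ1`). -/
theorem cpp_preserves_extremes {V E V' E' : Type} [Fintype V] [Fintype E] [Fintype V'] [Fintype E']
    (s t : E → V) (s' t' : E' → V') (le' : E' → E' → Prop)
    (φ0 : V → V') (φ1 : E → E') (hac : Acyclic s t)
    (hCPP : IsCPP s t s' t' le' φ0 φ1) (e : E) :
    -- (1) e = I(t(e))⁻ in (G, ≺_G)  ↔  φ1 e = I(t(φ1 e))⁻ in (Γ, ≺)
    ((∀ f, t f = t e → le' (φ1 e) (φ1 f)) ↔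
      (∀ f', t' f' = t' (φ1 e) → le' (φ1 e) f')) ∧
    -- (2) e = I(t(e))⁺ ↔ φ1 e = I(t(φ1 e))⁺
    ((∀ f, t f = t e → le' (φ1 f) (φ1 e)) ↔
      (∀ f', t' f' = t' (φ1 e) → le' f' (φ1 e))) ∧
    -- (3) e = O(s(e))⁻ ↔ φ1 e = O(s(φ1 e))⁻
    ((∀ f, s f = s e → le' (φ1 e) (φ1 f)) ↔
      (∀ f', s' f' = s' (φ1 e) → le' (φ1 e) f')) ∧
    -- (4) e = O(s(e))⁺ ↔ φ1 e = O(s(φ1 e))⁺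
    ((∀ f, s f = s e → le' (φ1 f) (φ1 e)) ↔
      (∀ f', s' f' = s' (φ1 e) → le' f' (φ1 e))) := by
    classical
  obtain ⟨hφ0, hφ1, hs, ht, ⟨hprog, hlin, hU1, hP2⟩, hE1, hE2, hE3, hE4⟩ := hCPP
  haveI := hlin
  have hrange : ∀ v : V, ¬ IsSource t' (φ0 v) ∧ ¬ IsSink s' (φ0 v) := by
    intro v
    have hmem : φ0 v ∈ Set.range φ0 := Set.mem_range_self v
    rw [hE1] at hmem
    exact hmem
  set SF : Finset V := Finset.univ.filter (fun v => IsSource t v) with hSF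
  set TF : Finset V := Finset.univ.filter (fun v => IsSink s v) with hTF
  set XF : Finset E' := Finset.univ.filter (fun e' => e' ∉ Set.range φ1) with hXFdef
  set F : V ⊕ V → Finset E' :=
    Sum.elim (fun v => Finset.univ.filter (fun e' => t' e' = φ0 v))
             (fun w => Finset.univ.filter (fun e' => s' e' = φ0 w)) with hFdef
  set K : Finset (V ⊕ V) := SF.disjSum TF with hKdef
  -- cardinality of XF
  have hXcard : XF.card = SF.card + TF.card := by
    have h1 : (Finset.univ.filter (fun e' => e' ∈ Set.range φ1)).card = Fintype.card E := by
      have himg : (Finset.univ.filter (fun e' => e' ∈ Set.range φ1)) =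
          Finset.univ.image φ1 := by
        ext x; simp [Set.mem_range]
      rw [himg, Finset.card_image_of_injective _ hφ1, Finset.card_univ]
    have h2 := Finset.card_filter_add_card_filter_not
      (s := (Finset.univ : Finset E')) (p := fun e' => e' ∈ Set.range φ1)
    rw [Finset.card_univ, h1] at h2
    have hXeq : XF.card + Fintype.card E = Fintype.card E' := by
      rw [add_comm]
      convert h2 using 3
    have hScard : ({v : V | IsSource t v}).ncard = SF.card := by
      rw [hSF]
      simp [Set.ncard_eq_toFinset_card', Set.toFinset_setOf]
    have hTcard : ({v : V | IsSink s v}).ncard = TF.card := by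
      rw [hTF]
      simp [Set.ncard_eq_toFinset_card', Set.toFinset_setOf]
    have e2 : Fintype.card E' = Fintype.card E + SF.card + TF.card := by
      have h := hE2
      rwa [Nat.card_eq_fintype_card, Nat.card_eq_fintype_card, hScard, hTcard] at h
    omega
  -- membership facts
  have hFsub : ∀ i ∈ K, F i ⊆ XF := by
    rintro (v | w) hi
    · rw [hKdef, Finset.inl_mem_disjSum, hSF, Finset.mem_filter] at hi
      intro e' he'
      rw [hFdef] at he'
      simp only [Sum.elim_inl, Finset.mem_filter, Finset.mem_univ, true_and] at he'
      rw [hXFdef, Finset.mem_filter]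
      refine ⟨Finset.mem_univ _, ?_⟩
      rintro ⟨g, rfl⟩
      have htg : t g = v := hφ0 (by rw [← ht g, he'])
      have : g ∈ inE t v := htg
      rw [hi.2] at this
      exact this
    · rw [hKdef, Finset.inr_mem_disjSum, hTF, Finset.mem_filter] at hi
      intro e' he'
      rw [hFdef] at he'
      simp only [Sum.elim_inr, Finset.mem_filter, Finset.mem_univ, true_and] at he'
      rw [hXFdef, Finset.mem_filter]
      refine ⟨Finset.mem_univ _, ?_⟩
      rintro ⟨g, rfl⟩
      have hsg : s g = w := hφ0 (by rw [← hs g, he'])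
      have : g ∈ outE s w := hsg
      rw [hi.2] at this
      exact this
  have hFne : ∀ i ∈ K, (F i).Nonempty := by
    rintro (v | w) hi
    · rw [hKdef, Finset.inl_mem_disjSum, hSF, Finset.mem_filter] at hi
      have hnsrc := (hrange v).1
      rw [IsSource] at hnsrc
      obtain ⟨e', he'⟩ := Set.nonempty_iff_ne_empty.mpr hnsrc
      exact ⟨e', by rw [hFdef]; simp only [Sum.elim_inl, Finset.mem_filter, Finset.mem_univ, true_and]; exact he'⟩
    · rw [hKdef, Finset.inr_mem_disjSum, hTF, Finset.mem_filter] at hi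
      have hnsnk := (hrange w).2
      rw [IsSink] at hnsnk
      obtain ⟨e', he'⟩ := Set.nonempty_iff_ne_empty.mpr hnsnk
      exact ⟨e', by rw [hFdef]; simp only [Sum.elim_inr, Finset.mem_filter, Finset.mem_univ, true_and]; exact he'⟩
  have hFdisj : ∀ i ∈ K, ∀ j ∈ K, i ≠ j → Disjoint (F i) (F j) := by
    rintro (v1 | w1) hi (v2 | w2) hj hij <;>
      rw [Finset.disjoint_left] <;> intro x hx1 hx2 <;> rw [hFdef] at hx1 hx2 <;>
      simp only [Sum.elim_inl, Sum.elim_inr, Finset.mem_filter, Finset.mem_univ, true_and] at hx1 hx2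
    · exact hij (by rw [hφ0 (hx1 ▸ hx2 ▸ rfl : φ0 v1 = φ0 v2)])
    · rw [hKdef, Finset.inl_mem_disjSum, hSF, Finset.mem_filter] at hi
      rw [hKdef, Finset.inr_mem_disjSum, hTF, Finset.mem_filter] at hj
      have : x ∈ inE t' (φ0 v1) ∩ outE s' (φ0 w2) := ⟨hx1, hx2⟩
      rw [hE3 v1 w2 hi.2 hj.2] at this
      exact this
    · rw [hKdef, Finset.inr_mem_disjSum, hTF, Finset.mem_filter] at hi
      rw [hKdef, Finset.inl_mem_disjSum, hSF, Finset.mem_filter] at hj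
      have : x ∈ inE t' (φ0 v2) ∩ outE s' (φ0 w1) := ⟨hx2, hx1⟩
      rw [hE3 v2 w1 hj.2 hi.2] at this
      exact this
    · exact hij (by rw [hφ0 (hx1 ▸ hx2 ▸ rfl : φ0 w1 = φ0 w2)])
  -- sum computation
  have hKcard : K.card = SF.card + TF.card := by
    rw [hKdef, Finset.card_disjSum]
  have hUsub : K.biUnion F ⊆ XF := Finset.biUnion_subset.mpr hFsub
  have hUcard : (K.biUnion F).card = ∑ i ∈ K, (F i).card := Finset.card_biUnion hFdisj
  have hsum_ge : K.card ≤ ∑ i ∈ K, (F i).card := by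
    calc K.card = ∑ _i ∈ K, 1 := by rw [Finset.sum_const, smul_eq_mul, mul_one]
    _ ≤ ∑ i ∈ K, (F i).card := Finset.sum_le_sum (fun i hi => Finset.card_pos.mpr (hFne i hi))
  have hsum_le : ∑ i ∈ K, (F i).card ≤ XF.card := by
    rw [← hUcard]
    exact Finset.card_le_card hUsub
  have hsum_eq : ∑ i ∈ K, (F i).card = ∑ _i ∈ K, 1 := by
    rw [Finset.sum_const, smul_eq_mul, mul_one]
    omega
  have hFone : ∀ i ∈ K, (F i).card = 1 := by
    intro i hi
    have := (Finset.sum_eq_sum_iff_of_le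
      (fun i hi => Finset.card_pos.mpr (hFne i hi) : ∀ i ∈ K, 1 ≤ (F i).card)).mp hsum_eq.symm
    exact (this i hi).symm
  have hUeq : K.biUnion F = XF := by
    apply Finset.eq_of_subset_of_card_le hUsub
    rw [hUcard]
    omega
  -- the classification of extra edges
  have classify : ∀ f' : E', f' ∉ Set.range φ1 →
      (∃ v, IsSource t v ∧ t' f' = φ0 v ∧ ∀ g', t' g' = φ0 v → g' = f') ∨
      (∃ w, IsSink s w ∧ s' f' = φ0 w ∧ ∀ g', s' g' = φ0 w → g' = f') := by
    intro f' hf'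
    have hmem : f' ∈ K.biUnion F := by
      rw [hUeq, hXFdef, Finset.mem_filter]
      exact ⟨Finset.mem_univ _, hf'⟩
    rw [Finset.mem_biUnion] at hmem
    obtain ⟨i, hi, hfi⟩ := hmem
    have hone := hFone i hi
    obtain ⟨x, hx⟩ := Finset.card_eq_one.mp hone
    rw [hx, Finset.mem_singleton] at hfi
    subst hfi
    rcases i with v | w
    · rw [hKdef, Finset.inl_mem_disjSum, hSF, Finset.mem_filter] at hi
      left
      refine ⟨v, hi.2, ?_, ?_⟩
      · have : f' ∈ F (Sum.inl v) := by rw [hx]; exact Finset.mem_singleton_self f'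
        rw [hFdef] at this
        simpa using this
      · intro g' hg'
        have : g' ∈ F (Sum.inl v) := by
          rw [hFdef]; simpa using hg'
        rw [hx, Finset.mem_singleton] at this
        exact this
    · rw [hKdef, Finset.inr_mem_disjSum, hTF, Finset.mem_filter] at hi
      right
      refine ⟨w, hi.2, ?_, ?_⟩
      · have : f' ∈ F (Sum.inr w) := by rw [hx]; exact Finset.mem_singleton_self f'
        rw [hFdef] at this
        simpa using this
      · intro g' hg'
        have : g' ∈ F (Sum.inr w) := by
          rw [hFdef]; simpa using hg'
        rw [hx, Finset.mem_singleton] at this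
        exact this
  -- key consequence of (E4) for extra edges at a target vertex
  have keyI : ∀ (u : V) (f' : E'), f' ∉ Set.range φ1 → t' f' = φ0 u → (∃ g, t g = u) →
      (∃ a, t' a = t' f' ∧ ltOf le' a f') ∧ (∃ b, t' b = t' f' ∧ ltOf le' f' b) := by
    intro u f' hX hT ⟨g, hg⟩
    rcases classify f' hX with ⟨v, hv, hTv, _⟩ | ⟨w, hw, hSw, hOnly⟩
    · exfalso
      have huv : u = v := hφ0 (by rw [← hT, hTv])
      have : g ∈ inE t v := by rw [← huv]; exact hg
      rw [hv] at this
      exact this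
    · have hnotin : f' ∉ inputE s' t' := by
        intro hin
        have : IsSource t' (s' f') := hin
        rw [hSw] at this
        exact (hrange w).1 this
      have hnotout : f' ∉ outputE s' t' := by
        intro hout
        have : IsSink s' (t' f') := hout
        rw [hT] at this
        exact (hrange u).2 this
      rcases hE4 f' hX hnotin hnotout with ⟨⟨a, ha, hlt⟩, _⟩ | ⟨⟨a, haI, hlta⟩, ⟨b, hbI, hltb⟩⟩
      · exfalso
        have hsa : s' a = φ0 w := by rw [(ha : s' a = s' f'), hSw]
        exact hlt.2 (hOnly a hsa)
      · exact ⟨⟨a, haI, hlta⟩, ⟨b, hbI, hltb⟩⟩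
  -- key consequence of (E4) for extra edges at a source vertex
  have keyO : ∀ (u : V) (f' : E'), f' ∉ Set.range φ1 → s' f' = φ0 u → (∃ g, s g = u) →
      (∃ a, s' a = s' f' ∧ ltOf le' a f') ∧ (∃ b, s' b = s' f' ∧ ltOf le' f' b) := by
    intro u f' hX hS ⟨g, hg⟩
    rcases classify f' hX with ⟨v, hv, hTv, hOnly⟩ | ⟨w, hw, hSw, _⟩
    · have hnotin : f' ∉ inputE s' t' := by
        intro hin
        have : IsSource t' (s' f') := hin
        rw [hS] at this
        exact (hrange u).1 this
      have hnotout : f' ∉ outputE s' t' := by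
        intro hout
        have : IsSink s' (t' f') := hout
        rw [hTv] at this
        exact (hrange v).2 this
      rcases hE4 f' hX hnotin hnotout with ⟨⟨a, ha, hlta⟩, ⟨b, hb, hltb⟩⟩ | ⟨⟨a, haI, hlt⟩, _⟩
      · exact ⟨⟨a, ha, hlta⟩, ⟨b, hb, hltb⟩⟩
      · exfalso
        have hta : t' a = φ0 v := by rw [(haI : t' a = t' f'), hTv]
        exact hlt.2 (hOnly a hta)
    · exfalso
      have huw : u = w := hφ0 (by rw [← hS, hSw])
      have : g ∈ outE s w := by rw [← huw]; exact hg
      rw [hw] at this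
      exact this
  -- the incoming edge set of t (φ1 e) in Γ, as a finset
  set Iset : Finset E' := Finset.univ.filter (fun g' => t' g' = t' (φ1 e)) with hIset
  set Oset : Finset E' := Finset.univ.filter (fun g' => s' g' = s' (φ1 e)) with hOset
  have hIne : Iset.Nonempty := ⟨φ1 e, by rw [hIset]; simp⟩
  have hOne : Oset.Nonempty := ⟨φ1 e, by rw [hOset]; simp⟩
  obtain ⟨mI, hmI, hmImin⟩ := finset_exists_min' le' hlin Iset hIne
  obtain ⟨MI, hMI, hMImax⟩ := finset_exists_max' le' hlin Iset hIne
  obtain ⟨mO, hmO, hmOmin⟩ := finset_exists_min' le' hlin Oset hOne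
  obtain ⟨MO, hMO, hMOmax⟩ := finset_exists_max' le' hlin Oset hOne
  rw [hIset, Finset.mem_filter] at hmI hMI
  rw [hOset, Finset.mem_filter] at hmO hMO
  -- the extremes of I(t'(φ1 e)) and O(s'(φ1 e)) lie in the range of φ1
  have hmIrange : ∃ f, t f = t e ∧ φ1 f = mI := by
    by_cases hr : mI ∈ Set.range φ1
    · obtain ⟨f, rfl⟩ := hr
      refine ⟨f, hφ0 ?_, rfl⟩
      rw [← ht, ← ht, hmI.2]
    · exfalso
      obtain ⟨⟨a, haT, hlt⟩, _⟩ := keyI (t e) mI hr (by rw [hmI.2, ht]) ⟨e, rfl⟩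
      have haIset : a ∈ Iset := by
        rw [hIset, Finset.mem_filter]
        exact ⟨Finset.mem_univ _, by rw [haT, hmI.2]⟩
      exact hlt.2 (antisymm hlt.1 (hmImin a haIset))
  have hMIrange : ∃ f, t f = t e ∧ φ1 f = MI := by
    by_cases hr : MI ∈ Set.range φ1
    · obtain ⟨f, rfl⟩ := hr
      refine ⟨f, hφ0 ?_, rfl⟩
      rw [← ht, ← ht, hMI.2]
    · exfalso
      obtain ⟨_, ⟨b, hbT, hlt⟩⟩ := keyI (t e) MI hr (by rw [hMI.2, ht]) ⟨e, rfl⟩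
      have hbIset : b ∈ Iset := by
        rw [hIset, Finset.mem_filter]
        exact ⟨Finset.mem_univ _, by rw [hbT, hMI.2]⟩
      exact hlt.2 (antisymm (hMImax b hbIset) hlt.1).symm
  have hmOrange : ∃ f, s f = s e ∧ φ1 f = mO := by
    by_cases hr : mO ∈ Set.range φ1
    · obtain ⟨f, rfl⟩ := hr
      refine ⟨f, hφ0 ?_, rfl⟩
      rw [← hs, ← hs, hmO.2]
    · exfalso
      obtain ⟨⟨a, haS, hlt⟩, _⟩ := keyO (s e) mO hr (by rw [hmO.2, hs]) ⟨e, rfl⟩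
      have haOset : a ∈ Oset := by
        rw [hOset, Finset.mem_filter]
        exact ⟨Finset.mem_univ _, by rw [haS, hmO.2]⟩
      exact hlt.2 (antisymm hlt.1 (hmOmin a haOset))
  have hMOrange : ∃ f, s f = s e ∧ φ1 f = MO := by
    by_cases hr : MO ∈ Set.range φ1
    · obtain ⟨f, rfl⟩ := hr
      refine ⟨f, hφ0 ?_, rfl⟩
      rw [← hs, ← hs, hMO.2]
    · exfalso
      obtain ⟨_, ⟨b, hbS, hlt⟩⟩ := keyO (s e) MO hr (by rw [hMO.2, hs]) ⟨e, rfl⟩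
      have hbOset : b ∈ Oset := by
        rw [hOset, Finset.mem_filter]
        exact ⟨Finset.mem_univ _, by rw [hbS, hMO.2]⟩
      exact hlt.2 (antisymm (hMOmax b hbOset) hlt.1).symm
  refine ⟨⟨?_, ?_⟩, ⟨?_, ?_⟩, ⟨?_, ?_⟩, ⟨?_, ?_⟩⟩
  · -- (1) forward
    intro H f' hf'
    obtain ⟨f, hft, hfeq⟩ := hmIrange
    have h1 : le' (φ1 e) mI := hfeq ▸ H f hft
    have h2 : le' mI f' := hmImin f' (by rw [hIset, Finset.mem_filter]; exact ⟨Finset.mem_univ _, hf'⟩)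
    exact trans_of le' h1 h2
  · -- (1) backward
    intro H f hf
    exact H (φ1 f) (by rw [ht, ht, hf])
  · -- (2) forward
    intro H f' hf'
    obtain ⟨f, hft, hfeq⟩ := hMIrange
    have h1 : le' MI (φ1 e) := hfeq ▸ H f hft
    have h2 : le' f' MI := hMImax f' (by rw [hIset, Finset.mem_filter]; exact ⟨Finset.mem_univ _, hf'⟩)
    exact trans_of le' h2 h1
  · -- (2) backward
    intro H f hf
    exact H (φ1 f) (by rw [ht, ht, hf])
  · -- (3) forward
    intro H f' hf'
    obtain ⟨f, hft, hfeq⟩ := hmOrange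
    have h1 : le' (φ1 e) mO := hfeq ▸ H f hft
    have h2 : le' mO f' := hmOmin f' (by rw [hOset, Finset.mem_filter]; exact ⟨Finset.mem_univ _, hf'⟩)
    exact trans_of le' h1 h2
  · -- (3) backward
    intro H f hf
    exact H (φ1 f) (by rw [hs, hs, hf])
  · -- (4) forward
    intro H f' hf'
    obtain ⟨f, hft, hfeq⟩ := hMOrange
    have h1 : le' MO (φ1 e) := hfeq ▸ H f hft
    have h2 : le' f' MO := hMOmax f' (by rw [hOset, Finset.mem_filter]; exact ⟨Finset.mem_univ _, hf'⟩)
    exact trans_of le' h2 h1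
  · -- (4) backward
    intro H f hf
    exact H (φ1 f) (by rw [hs, hs, hf])
end

section
/- Let G be an acyclic directed graph and φ : G → (Γ, ≺) a CPP-extension of G. Then the linear order ≺_G on E(G) defined by e1 ≺_G e2 iff φ1(e1) ≺ φ1(e2) is an upward planar order on G, i.e., ≺_G satisfies (U1), (U2) and (U3). -/
variable {V E : Type}

private lemma exists_rel_min {α : Type} (r : α → α → Prop)
    (htot : ∀ a b, r a b ∨ r b a)
    (htrans : ∀ a b c, r a b → r b c → r a c) :
    ∀ (S : Finset α), S.Nonempty → ∃ m ∈ S, ∀ x ∈ S, r m x := by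
  classical
  intro S
  induction S using Finset.induction_on with
  | empty => intro h; exact absurd rfl h.ne_empty
  | @insert a S ha IH =>
    intro _
    rcases S.eq_empty_or_nonempty with hS | hS
    · subst hS
      refine ⟨a, by simp, ?_⟩
      intro x hx
      simp only [Finset.mem_insert, Finset.notMem_empty, or_false] at hx
      exact hx ▸ ((htot x x).elim id id)
    · obtain ⟨m, hm, hmin⟩ := IH hS
      rcases htot m a with h | h
      · refine ⟨m, Finset.mem_insert_of_mem hm, fun x hx => ?_⟩
        rcases Finset.mem_insert.mp hx with h' | h'
        · exact h' ▸ h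
        · exact hmin x h'
      · refine ⟨a, Finset.mem_insert_self a S, fun x hx => ?_⟩
        rcases Finset.mem_insert.mp hx with h' | h'
        · exact h' ▸ ((htot x x).elim id id)
        · exact htrans a m x h (hmin x h')

private lemma key_bound {V' E' : Type} (s' t' : E' → V') (le' : E' → E' → Prop)
    (htot : ∀ a b, le' a b ∨ le' b a)
    (htrans : ∀ a b c, le' a b → le' b c → le' a c)
    (hanti : ∀ a b, le' a b → le' b a → a = b)
    (hU1 : ∀ e1 e2, Relation.TransGen (fun a b => t' a = s' b) e1 e2 → le' e1 e2 ∧ e1 ≠ e2)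
    (hP2 : ∀ e1 e2 e3, (le' e1 e2 ∧ e1 ≠ e2) → (le' e2 e3 ∧ e2 ≠ e3) →
      Relation.TransGen (fun a b => t' a = s' b) e1 e3 →
      Relation.TransGen (fun a b => t' a = s' b) e1 e2 ∨
      Relation.TransGen (fun a b => t' a = s' b) e2 e3)
    {V1 V2 : V'} (hne : V1 ≠ V2)
    {o1 : E'} (ho1 : s' o1 = V1) {o : E'} (ho : s' o = V2)
    {e i1 i2 : E'} (he : t' e = V1) (hi1 : t' i1 = V2) (hi2 : t' i2 = V2)
    (h1 : le' i1 e) (h2 : le' e i2) :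
    (∃ g, t' g = V2 ∧ ∀ f, t' f = V1 → le' f g ∧ f ≠ g) ∧
    (∀ a, t' a = V2 → (∀ x, t' x = V2 → le' a x) → ∀ f, t' f = V1 → le' a f) := by
  have hne' : ∀ {x y : E'}, t' x = V1 → t' y = V2 → x ≠ y := by
    rintro x y hx hy rfl; exact hne (hx ▸ hy ▸ rfl)
  have hei2 : e ≠ i2 := hne' he hi2
  have hi1e : i1 ≠ e := (hne' he hi1).symm
  have hi2o : le' i2 o ∧ i2 ≠ o :=
    hU1 i2 o (Relation.TransGen.single (show t' i2 = s' o by rw [hi2, ho]))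
  have heo : le' e o ∧ e ≠ o := by
    refine ⟨htrans _ _ _ h2 hi2o.1, ?_⟩
    rintro rfl
    exact hei2 (hanti _ _ h2 hi2o.1)
  have hcase : Relation.TransGen (fun a b => t' a = s' b) e o := by
    rcases hP2 i1 e o ⟨h1, hi1e⟩ heo
        (Relation.TransGen.single (show t' i1 = s' o by rw [hi1, ho])) with h | h
    · exfalso
      obtain ⟨p, hip, hpe⟩ := Relation.TransGen.head'_iff.mp h
      have hsp : s' p = V2 := by rw [← hip, hi1]
      rcases Relation.reflTransGen_iff_eq_or_transGen.mp hpe with rfl | hpe'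
      · have := hU1 i2 e (Relation.TransGen.single
          (show t' i2 = s' e by rw [hi2, hsp]))
        exact hei2 (hanti _ _ h2 this.1)
      · have h1' := hU1 i2 p (Relation.TransGen.single (show t' i2 = s' p by rw [hi2, hsp]))
        have h2' := hU1 p e hpe'
        exact hei2 (hanti _ _ h2 (htrans _ _ _ h1'.1 h2'.1))
    · exact h
  obtain ⟨g, hEg, hgo⟩ := Relation.TransGen.tail'_iff.mp hcase
  have hg : t' g = V2 := by rw [show t' g = s' o from hgo, ho]
  have hEg' : Relation.TransGen (fun a b => t' a = s' b) e g := by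
    rcases Relation.reflTransGen_iff_eq_or_transGen.mp hEg with hge | h
    · exact absurd (hge ▸ rfl : e = g) (hne' he hg)
    · exact h
  obtain ⟨u, heu, hug⟩ := Relation.TransGen.head'_iff.mp hEg'
  have hsu : s' u = V1 := by rw [← show t' e = s' u from heu, he]
  constructor
  · refine ⟨g, hg, fun f hf => ?_⟩
    exact hU1 f g (Relation.TransGen.head' (show t' f = s' u by rw [hf, hsu]) hug)
  · intro a ha hamin f hf
    rcases htot a f with h | hfa
    · exact h
    exfalso
    have hfa' : f ≠ a := hne' hf ha
    have heo1 : le' e o1 ∧ e ≠ o1 :=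
      hU1 e o1 (Relation.TransGen.single (show t' e = s' o1 by rw [he, ho1]))
    have hai1 : le' a i1 := hamin i1 hi1
    have hao1 : le' a o1 ∧ a ≠ o1 := by
      refine ⟨htrans _ _ _ hai1 (htrans _ _ _ h1 heo1.1), ?_⟩
      rintro rfl
      exact heo1.2 (hanti _ _ heo1.1 (htrans _ _ _ hai1 h1))
    rcases hP2 f a o1 ⟨hfa, hfa'⟩ hao1
        (Relation.TransGen.single (show t' f = s' o1 by rw [hf, ho1])) with h | h
    · -- TransGen f a : gives TransGen e a, so le' e a ≤ i1 ≤ e with e ≠ i1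
      obtain ⟨w, hfw, hwa⟩ := Relation.TransGen.head'_iff.mp h
      have hsw : s' w = V1 := by rw [← show t' f = s' w from hfw, hf]
      have hea := hU1 e a (Relation.TransGen.head' (show t' e = s' w by rw [he, hsw]) hwa)
      exact hi1e (hanti _ _ h1 (htrans _ _ _ hea.1 hai1))
    · -- TransGen a o1 : build a cycle through u
      obtain ⟨hh, hah, hho1⟩ := Relation.TransGen.tail'_iff.mp h
      have hth : t' hh = V1 := by rw [show t' hh = s' o1 from hho1, ho1]
      have hah' : Relation.TransGen (fun a b => t' a = s' b) a hh := by
        rcases Relation.reflTransGen_iff_eq_or_transGen.mp hah with hha | h'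
        · exact absurd (hha ▸ rfl : a = hh) (hne' hth ha).symm
        · exact h'
      obtain ⟨w, haw, hwh⟩ := Relation.TransGen.head'_iff.mp hah'
      have hsw : s' w = V2 := by rw [← show t' a = s' w from haw, ha]
      have hcyc : Relation.TransGen (fun a b => t' a = s' b) u u :=
        Relation.TransGen.tail'
          ((hug.tail (show t' g = s' w by rw [hg, hsw])).trans hwh)
          (show t' hh = s' u by rw [hth, hsu])
      exact (hU1 u u hcyc).2 rfl

private lemma classify_extra {V E V' E' : Type} [Fintype V] [Fintype E] [Fintype V'] [Fintype E']
    (s t : E → V) (s' t' : E' → V') (φ0 : V → V') (φ1 : E → E')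
    (hφ0 : Function.Injective φ0) (hφ1 : Function.Injective φ1)
    (hs : ∀ e, s' (φ1 e) = φ0 (s e)) (ht : ∀ e, t' (φ1 e) = φ0 (t e))
    (hE1 : Set.range φ0 = {v : V' | ¬ IsSource t' v ∧ ¬ IsSink s' v})
    (hE2 : Nat.card E' = Nat.card E + ({v : V | IsSource t v}).ncard
      + ({v : V | IsSink s v}).ncard)
    (hE3 : ∀ v w, IsSource t v → IsSink s w → inE t' (φ0 v) ∩ outE s' (φ0 w) = ∅) :
    ∀ e' : E', e' ∉ Set.range φ1 →
      (∃ v, IsSource t v ∧ t' e' = φ0 v ∧ ∀ x, t' x = φ0 v → x = e') ∨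
      (∃ w, IsSink s w ∧ s' e' = φ0 w ∧ ∀ x, s' x = φ0 w → x = e') := by
  classical
  have hnot : ∀ v : V, ¬ IsSource t' (φ0 v) ∧ ¬ IsSink s' (φ0 v) := by
    intro v
    have : φ0 v ∈ Set.range φ0 := ⟨v, rfl⟩
    rwa [hE1] at this
  have hIne : ∀ v : V, (inE t' (φ0 v)).Nonempty := fun v =>
    Set.nonempty_iff_ne_empty.mpr (hnot v).1
  have hOne : ∀ v : V, (outE s' (φ0 v)).Nonempty := fun v =>
    Set.nonempty_iff_ne_empty.mpr (hnot v).2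
  have hIsub : ∀ v : V, IsSource t v → ∀ x, x ∈ inE t' (φ0 v) → x ∉ Set.range φ1 := by
    rintro v hv x hx ⟨z, rfl⟩
    have h1 : t z = v := hφ0 (by rw [← ht z]; exact hx)
    have hz : z ∈ inE t v := h1
    rw [IsSource] at hv
    rw [hv] at hz
    exact hz
  have hOsub : ∀ w : V, IsSink s w → ∀ x, x ∈ outE s' (φ0 w) → x ∉ Set.range φ1 := by
    rintro w hw x hx ⟨z, rfl⟩
    have h1 : s z = w := hφ0 (by rw [← hs z]; exact hx)
    have hz : z ∈ outE s w := h1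
    rw [IsSink] at hw
    rw [hw] at hz
    exact hz
  set S : Set V := {v : V | IsSource t v} with hS
  set T : Set V := {v : V | IsSink s v} with hT
  set X : Set E' := (Set.range φ1)ᶜ with hX
  let ψ : ↥S ⊕ ↥T → ↥X := fun p =>
    match p with
    | .inl ⟨v, hv⟩ => ⟨(hIne v).some, hIsub v hv _ (hIne v).some_mem⟩
    | .inr ⟨w, hw⟩ => ⟨(hOne w).some, hOsub w hw _ (hOne w).some_mem⟩
  have hval_inl : ∀ (v : V) (hv : v ∈ S), ((ψ (.inl ⟨v, hv⟩)) : E') = (hIne v).some :=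
    fun v hv => rfl
  have hval_inr : ∀ (w : V) (hw : w ∈ T), ((ψ (.inr ⟨w, hw⟩)) : E') = (hOne w).some :=
    fun w hw => rfl
  have hinj : Function.Injective ψ := by
    rintro (⟨v1, hv1⟩ | ⟨w1, hw1⟩) (⟨v2, hv2⟩ | ⟨w2, hw2⟩) h
    · have h' : ((ψ (.inl ⟨v1, hv1⟩)) : E') = ((ψ (.inl ⟨v2, hv2⟩)) : E') := by rw [h]
      rw [hval_inl v1 hv1, hval_inl v2 hv2] at h'
      have hvv : φ0 v1 = φ0 v2 := by
        rw [← (hIne v1).some_mem, ← (hIne v2).some_mem, h']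
      have := hφ0 hvv
      subst this; rfl
    · exfalso
      have h' : ((ψ (.inl ⟨v1, hv1⟩)) : E') = ((ψ (.inr ⟨w2, hw2⟩)) : E') := by rw [h]
      rw [hval_inl v1 hv1, hval_inr w2 hw2] at h'
      have hmem : (hIne v1).some ∈ inE t' (φ0 v1) ∩ outE s' (φ0 w2) :=
        ⟨(hIne v1).some_mem, by rw [h']; exact (hOne w2).some_mem⟩
      rw [hE3 v1 w2 hv1 hw2] at hmem
      exact hmem
    · exfalso
      have h' : ((ψ (.inr ⟨w1, hw1⟩)) : E') = ((ψ (.inl ⟨v2, hv2⟩)) : E') := by rw [h]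
      rw [hval_inr w1 hw1, hval_inl v2 hv2] at h'
      have hmem : (hIne v2).some ∈ inE t' (φ0 v2) ∩ outE s' (φ0 w1) :=
        ⟨(hIne v2).some_mem, by rw [← h']; exact (hOne w1).some_mem⟩
      rw [hE3 v2 w1 hv2 hw1] at hmem
      exact hmem
    · have h' : ((ψ (.inr ⟨w1, hw1⟩)) : E') = ((ψ (.inr ⟨w2, hw2⟩)) : E') := by rw [h]
      rw [hval_inr w1 hw1, hval_inr w2 hw2] at h'
      have hvv : φ0 w1 = φ0 w2 := by
        rw [← (hOne w1).some_mem, ← (hOne w2).some_mem, h']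
      have := hφ0 hvv
      subst this; rfl
  have hcard : Nat.card (↥S ⊕ ↥T) = Nat.card ↥X := by
    have c1 : Nat.card (↥S ⊕ ↥T) = S.ncard + T.ncard := by
      rw [Nat.card_sum, Nat.card_coe_set_eq, Nat.card_coe_set_eq]
    have c2 : (Set.range φ1).ncard + X.ncard = Nat.card E' :=
      Set.ncard_add_ncard_compl _
    have c3 : (Set.range φ1).ncard = Nat.card E := by
      rw [← Nat.card_coe_set_eq]
      exact Nat.card_range_of_injective hφ1
    have c4 : Nat.card ↥X = X.ncard := Nat.card_coe_set_eq _
    omega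
  have hsurj : Function.Surjective ψ :=
    ((Nat.bijective_iff_injective_and_card ψ).mpr ⟨hinj, hcard⟩).2
  have huniqI : ∀ v, v ∈ S → ∀ y, t' y = φ0 v → y = (hIne v).some := by
    intro v hv y hy
    have hyX : y ∉ Set.range φ1 := hIsub v hv y hy
    obtain ⟨q, hq⟩ := hsurj ⟨y, hyX⟩
    have hqval : (ψ q : E') = y := by rw [hq]
    match q with
    | .inl ⟨v2, hv2⟩ =>
      rw [hval_inl v2 hv2] at hqval
      have hvv : φ0 v2 = φ0 v := by rw [← (hIne v2).some_mem, hqval, hy]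
      have := hφ0 hvv
      subst this
      exact hqval.symm
    | .inr ⟨w2, hw2⟩ =>
      exfalso
      rw [hval_inr w2 hw2] at hqval
      have hmem : y ∈ inE t' (φ0 v) ∩ outE s' (φ0 w2) :=
        ⟨hy, by rw [← hqval]; exact (hOne w2).some_mem⟩
      rw [hE3 v w2 hv hw2] at hmem
      exact hmem
  have huniqO : ∀ w, w ∈ T → ∀ y, s' y = φ0 w → y = (hOne w).some := by
    intro w hw y hy
    have hyX : y ∉ Set.range φ1 := hOsub w hw y hy
    obtain ⟨q, hq⟩ := hsurj ⟨y, hyX⟩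
    have hqval : (ψ q : E') = y := by rw [hq]
    match q with
    | .inr ⟨w2, hw2⟩ =>
      rw [hval_inr w2 hw2] at hqval
      have hvv : φ0 w2 = φ0 w := by rw [← (hOne w2).some_mem, hqval, hy]
      have := hφ0 hvv
      subst this
      exact hqval.symm
    | .inl ⟨v2, hv2⟩ =>
      exfalso
      rw [hval_inl v2 hv2] at hqval
      have hmem : y ∈ inE t' (φ0 v2) ∩ outE s' (φ0 w) :=
        ⟨by rw [← hqval]; exact (hIne v2).some_mem, hy⟩
      rw [hE3 v2 w hv2 hw] at hmem
      exact hmem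
  intro e' he'
  obtain ⟨p, hp⟩ := hsurj ⟨e', he'⟩
  have hpval : (ψ p : E') = e' := by rw [hp]
  match p with
  | .inl ⟨v, hv⟩ =>
    rw [hval_inl v hv] at hpval
    refine Or.inl ⟨v, hv, ?_, ?_⟩
    · rw [← hpval]; exact (hIne v).some_mem
    · intro x hx
      rw [huniqI v hv x hx, hpval]
  | .inr ⟨w, hw⟩ =>
    rw [hval_inr w hw] at hpval
    refine Or.inr ⟨w, hw, ?_, ?_⟩
    · rw [← hpval]; exact (hOne w).some_mem
    · intro x hx
      rw [huniqO w hw x hx, hpval]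

private lemma extremes_inE {V E V' E' : Type} [Fintype E'] (s t : E → V)
    (s' t' : E' → V') (le' : E' → E' → Prop) (φ0 : V → V') (φ1 : E → E')
    (hφ0 : Function.Injective φ0)
    (ht : ∀ e, t' (φ1 e) = φ0 (t e))
    (hE1 : Set.range φ0 = {v : V' | ¬ IsSource t' v ∧ ¬ IsSink s' v})
    (htot : ∀ a b, le' a b ∨ le' b a)
    (htrans : ∀ a b c, le' a b → le' b c → le' a c)
    (hanti : ∀ a b, le' a b → le' b a → a = b)
    (hclass : ∀ e' : E', e' ∉ Set.range φ1 →
      (∃ v, IsSource t v ∧ t' e' = φ0 v ∧ ∀ x, t' x = φ0 v → x = e') ∨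
      (∃ w, IsSink s w ∧ s' e' = φ0 w ∧ ∀ x, s' x = φ0 w → x = e'))
    (hE4 : ∀ e' : E', e' ∉ Set.range φ1 → e' ∉ inputE s' t' → e' ∉ outputE s' t' →
      ((∃ a ∈ outE s' (s' e'), ltOf le' a e') ∧ (∃ b ∈ outE s' (s' e'), ltOf le' e' b)) ∨
      ((∃ a ∈ inE t' (t' e'), ltOf le' a e') ∧ (∃ b ∈ inE t' (t' e'), ltOf le' e' b)))
    (v : V) (hv : (inE t v).Nonempty) :
    (∃ z, t z = v ∧ ∀ x, t' x = φ0 v → le' (φ1 z) x) ∧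
    (∃ z, t z = v ∧ ∀ x, t' x = φ0 v → le' x (φ1 z)) := by
  classical
  have hnot : ∀ u : V, ¬ IsSource t' (φ0 u) ∧ ¬ IsSink s' (φ0 u) := by
    intro u
    have : φ0 u ∈ Set.range φ0 := ⟨u, rfl⟩
    rwa [hE1] at this
  obtain ⟨z0, hz0⟩ := hv
  have hz0' : t' (φ1 z0) = φ0 v := by rw [ht z0]; exact congrArg φ0 hz0
  have hAfin := Set.toFinite (inE t' (φ0 v))
  have hz0A : φ1 z0 ∈ hAfin.toFinset := hAfin.mem_toFinset.mpr hz0'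
  have hkey : ∀ m, t' m = φ0 v →
      ((∀ a, t' a = φ0 v → ¬ ltOf le' a m) ∨ (∀ b, t' b = φ0 v → ¬ ltOf le' m b)) →
      m ∈ Set.range φ1 := by
    intro m hm hext
    by_contra hmr
    rcases hclass m hmr with ⟨u, hu, htm, _⟩ | ⟨w, hw, hsm, huniq⟩
    · have huv : u = v := hφ0 (by rw [← htm, hm])
      subst huv
      rw [IsSource] at hu
      rw [hu] at hz0
      exact hz0
    · have hni : m ∉ inputE s' t' := by
        intro hmem
        have h2 : IsSource t' (s' m) := hmem
        rw [hsm] at h2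
        exact (hnot w).1 h2
      have hno : m ∉ outputE s' t' := by
        intro hmem
        have h2 : IsSink s' (t' m) := hmem
        rw [hm] at h2
        exact (hnot v).2 h2
      rcases hE4 m hmr hni hno with ⟨⟨a, ha, hlta⟩, ⟨b, hb, hltb⟩⟩ |
          ⟨⟨a, ha, hlta⟩, ⟨b, hb, hltb⟩⟩
      · have haa : s' a = φ0 w := by rw [show s' a = s' m from ha, hsm]
        rw [huniq a haa] at hlta
        exact hlta.2 rfl
      · rcases hext with hext | hext
        · exact hext a (by rw [show t' a = t' m from ha, hm]) hlta
        · exact hext b (by rw [show t' b = t' m from hb, hm]) hltb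
  constructor
  · obtain ⟨m, hmF, hmin⟩ := exists_rel_min le' htot htrans hAfin.toFinset ⟨_, hz0A⟩
    have hmA : t' m = φ0 v := hAfin.mem_toFinset.mp hmF
    have hmin' : ∀ x, t' x = φ0 v → le' m x := fun x hx =>
      hmin x (hAfin.mem_toFinset.mpr hx)
    obtain ⟨z, rfl⟩ := hkey m hmA
      (Or.inl (fun a haA hlt => hlt.2 (hanti a m hlt.1 (hmin' a haA))))
    exact ⟨z, hφ0 (by rw [← ht z]; exact hmA), hmin'⟩
  · obtain ⟨m, hmF, hmax⟩ := exists_rel_min (fun a b => le' b a)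
      (fun a b => (htot b a)) (fun a b c h1 h2 => htrans c b a h2 h1)
      hAfin.toFinset ⟨_, hz0A⟩
    have hmA : t' m = φ0 v := hAfin.mem_toFinset.mp hmF
    have hmax' : ∀ x, t' x = φ0 v → le' x m := fun x hx =>
      hmax x (hAfin.mem_toFinset.mpr hx)
    obtain ⟨z, rfl⟩ := hkey m hmA
      (Or.inr (fun b hbA hlt => hlt.2 ((hanti m b hlt.1 (hmax' b hbA)).symm ▸ rfl)))
    exact ⟨z, hφ0 (by rw [← ht z]; exact hmA), hmax'⟩

private lemma extremes_outE {V E V' E' : Type} [Fintype E'] (s t : E → V)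
    (s' t' : E' → V') (le' : E' → E' → Prop) (φ0 : V → V') (φ1 : E → E')
    (hφ0 : Function.Injective φ0)
    (hs : ∀ e, s' (φ1 e) = φ0 (s e))
    (hE1 : Set.range φ0 = {v : V' | ¬ IsSource t' v ∧ ¬ IsSink s' v})
    (htot : ∀ a b, le' a b ∨ le' b a)
    (htrans : ∀ a b c, le' a b → le' b c → le' a c)
    (hanti : ∀ a b, le' a b → le' b a → a = b)
    (hclass : ∀ e' : E', e' ∉ Set.range φ1 →
      (∃ v, IsSource t v ∧ t' e' = φ0 v ∧ ∀ x, t' x = φ0 v → x = e') ∨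
      (∃ w, IsSink s w ∧ s' e' = φ0 w ∧ ∀ x, s' x = φ0 w → x = e'))
    (hE4 : ∀ e' : E', e' ∉ Set.range φ1 → e' ∉ inputE s' t' → e' ∉ outputE s' t' →
      ((∃ a ∈ outE s' (s' e'), ltOf le' a e') ∧ (∃ b ∈ outE s' (s' e'), ltOf le' e' b)) ∨
      ((∃ a ∈ inE t' (t' e'), ltOf le' a e') ∧ (∃ b ∈ inE t' (t' e'), ltOf le' e' b)))
    (v : V) (hv : (outE s v).Nonempty) :
    (∃ z, s z = v ∧ ∀ x, s' x = φ0 v → le' (φ1 z) x) ∧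
    (∃ z, s z = v ∧ ∀ x, s' x = φ0 v → le' x (φ1 z)) := by
  classical
  have hnot : ∀ u : V, ¬ IsSource t' (φ0 u) ∧ ¬ IsSink s' (φ0 u) := by
    intro u
    have : φ0 u ∈ Set.range φ0 := ⟨u, rfl⟩
    rwa [hE1] at this
  obtain ⟨z0, hz0⟩ := hv
  have hz0' : s' (φ1 z0) = φ0 v := by rw [hs z0]; exact congrArg φ0 hz0
  have hAfin := Set.toFinite (outE s' (φ0 v))
  have hz0A : φ1 z0 ∈ hAfin.toFinset := hAfin.mem_toFinset.mpr hz0'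
  have hkey : ∀ m, s' m = φ0 v →
      ((∀ a, s' a = φ0 v → ¬ ltOf le' a m) ∨ (∀ b, s' b = φ0 v → ¬ ltOf le' m b)) →
      m ∈ Set.range φ1 := by
    intro m hm hext
    by_contra hmr
    rcases hclass m hmr with ⟨u, hu, htm, huniq⟩ | ⟨w, hw, hsm, _⟩
    · have hni : m ∉ inputE s' t' := by
        intro hmem
        have h2 : IsSource t' (s' m) := hmem
        rw [hm] at h2
        exact (hnot v).1 h2
      have hno : m ∉ outputE s' t' := by
        intro hmem
        have h2 : IsSink s' (t' m) := hmem
        rw [htm] at h2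
        exact (hnot u).2 h2
      rcases hE4 m hmr hni hno with ⟨⟨a, ha, hlta⟩, ⟨b, hb, hltb⟩⟩ |
          ⟨⟨a, ha, hlta⟩, ⟨b, hb, hltb⟩⟩
      · rcases hext with hext | hext
        · exact hext a (by rw [show s' a = s' m from ha, hm]) hlta
        · exact hext b (by rw [show s' b = s' m from hb, hm]) hltb
      · have haa : t' a = φ0 u := by rw [show t' a = t' m from ha, htm]
        rw [huniq a haa] at hlta
        exact hlta.2 rfl
    · have hwv : w = v := hφ0 (by rw [← hsm, hm])
      subst hwv
      rw [IsSink] at hw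
      rw [hw] at hz0
      exact hz0
  constructor
  · obtain ⟨m, hmF, hmin⟩ := exists_rel_min le' htot htrans hAfin.toFinset ⟨_, hz0A⟩
    have hmA : s' m = φ0 v := hAfin.mem_toFinset.mp hmF
    have hmin' : ∀ x, s' x = φ0 v → le' m x := fun x hx =>
      hmin x (hAfin.mem_toFinset.mpr hx)
    obtain ⟨z, rfl⟩ := hkey m hmA
      (Or.inl (fun a haA hlt => hlt.2 (hanti a m hlt.1 (hmin' a haA))))
    exact ⟨z, hφ0 (by rw [← hs z]; exact hmA), hmin'⟩
  · obtain ⟨m, hmF, hmax⟩ := exists_rel_min (fun a b => le' b a)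
      (fun a b => (htot b a)) (fun a b c h1 h2 => htrans c b a h2 h1)
      hAfin.toFinset ⟨_, hz0A⟩
    have hmA : s' m = φ0 v := hAfin.mem_toFinset.mp hmF
    have hmax' : ∀ x, s' x = φ0 v → le' x m := fun x hx =>
      hmax x (hAfin.mem_toFinset.mpr hx)
    obtain ⟨z, rfl⟩ := hkey m hmA
      (Or.inr (fun b hbA hlt => hlt.2 ((hanti m b hlt.1 (hmax' b hbA)).symm ▸ rfl)))
    exact ⟨z, hφ0 (by rw [← hs z]; exact hmA), hmax'⟩

/-- any CPP-extension of an acyclic directed graph `G` induces an upward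
planar order on `E(G)`. -/
theorem cpp_induces_upo {V E V' E' : Type} [Fintype V] [Fintype E] [Fintype V'] [Fintype E']
    (s t : E → V) (s' t' : E' → V') (le' : E' → E' → Prop)
    (φ0 : V → V') (φ1 : E → E') (hac : Acyclic s t)
    (hCPP : IsCPP s t s' t' le' φ0 φ1) :
    IsUPO s t (fun a b => le' (φ1 a) (φ1 b)) := by
  classical
  obtain ⟨hφ0, hφ1, hs, ht, hPOP, hE1, hE2, hE3, hE4⟩ := hCPP
  obtain ⟨hprog, hlin', hU1', hP2'⟩ := hPOP
  have htot : ∀ a b, le' a b ∨ le' b a := hlin'.total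
  have htrans : ∀ a b c, le' a b → le' b c → le' a c := fun a b c => hlin'.trans a b c
  have hanti : ∀ a b, le' a b → le' b a → a = b := fun a b => hlin'.antisymm a b
  have hrefl : ∀ a, le' a a := hlin'.refl
  have hU1k : ∀ e1 e2, Relation.TransGen (fun a b => t' a = s' b) e1 e2 →
      le' e1 e2 ∧ e1 ≠ e2 := fun e1 e2 h => hU1' e1 e2 h
  have hP2k : ∀ e1 e2 e3, (le' e1 e2 ∧ e1 ≠ e2) → (le' e2 e3 ∧ e2 ≠ e3) →
      Relation.TransGen (fun a b => t' a = s' b) e1 e3 →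
      Relation.TransGen (fun a b => t' a = s' b) e1 e2 ∨
      Relation.TransGen (fun a b => t' a = s' b) e2 e3 :=
    fun e1 e2 e3 h12 h23 h13 => hP2' e1 e2 e3 h12 h23 h13
  have hclass := classify_extra s t s' t' φ0 φ1 hφ0 hφ1 hs ht hE1 hE2 hE3
  have hnot : ∀ u : V, ¬ IsSource t' (φ0 u) ∧ ¬ IsSink s' (φ0 u) := by
    intro u
    have : φ0 u ∈ Set.range φ0 := ⟨u, rfl⟩
    rwa [hE1] at this
  have hIne' : ∀ u : V, ∃ x, t' x = φ0 u := fun u =>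
    Set.nonempty_iff_ne_empty.mpr (hnot u).1
  have hOne' : ∀ u : V, ∃ x, s' x = φ0 u := fun u =>
    Set.nonempty_iff_ne_empty.mpr (hnot u).2
  have hminI : ∀ v, (inE t v).Nonempty →
      ∃ z, t z = v ∧ ∀ x, t' x = φ0 v → le' (φ1 z) x := fun v hv =>
    (extremes_inE s t s' t' le' φ0 φ1 hφ0 ht hE1 htot htrans hanti hclass hE4 v hv).1
  have hmaxI : ∀ v, (inE t v).Nonempty →
      ∃ z, t z = v ∧ ∀ x, t' x = φ0 v → le' x (φ1 z) := fun v hv =>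
    (extremes_inE s t s' t' le' φ0 φ1 hφ0 ht hE1 htot htrans hanti hclass hE4 v hv).2
  have hminO : ∀ v, (outE s v).Nonempty →
      ∃ z, s z = v ∧ ∀ x, s' x = φ0 v → le' (φ1 z) x := fun v hv =>
    (extremes_outE s t s' t' le' φ0 φ1 hφ0 hs hE1 htot htrans hanti hclass hE4 v hv).1
  have hmaxO : ∀ v, (outE s v).Nonempty →
      ∃ z, s z = v ∧ ∀ x, s' x = φ0 v → le' x (φ1 z) := fun v hv =>
    (extremes_outE s t s' t' le' φ0 φ1 hφ0 hs hE1 htot htrans hanti hclass hE4 v hv).2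
  -- lifted U1 for G
  have hliftG : ∀ e1 e2, Relation.TransGen (fun a b => t a = s b) e1 e2 →
      Relation.TransGen (fun a b => t' a = s' b) (φ1 e1) (φ1 e2) := fun e1 e2 h =>
    Relation.TransGen.lift (r := fun a b => t a = s b) (p := fun a b => t' a = s' b) φ1 (fun a b hab => by show t' (φ1 a) = s' (φ1 b); rw [ht a, hs b]; exact congrArg φ0 hab) e1 e2 h
  have hU1G : U1 s t (fun a b => le' (φ1 a) (φ1 b)) := by
    intro e1 e2 h
    have h' := hU1k _ _ (hliftG e1 e2 h)
    exact ⟨h'.1, fun hh => h'.2 (congrArg φ1 hh)⟩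
  refine ⟨?_, hU1G, ?_, ?_⟩
  · -- linear order
    exact { refl := fun a => hrefl _,
            trans := fun a b c hab hbc => htrans _ _ _ hab hbc,
            antisymm := fun a b h1 h2 => hφ1 (hanti _ _ h1 h2),
            total := fun a b => htot _ _ }
  · -- U2
    intro v
    constructor
    · apply Set.eq_empty_iff_forall_notMem.mpr
      rintro y ⟨⟨ia, hia, ib, hib, hy1, hy2⟩, ⟨oa, hoa, ob, hob, hy3, hy4⟩⟩
      have hro := hU1G ib oa (Relation.TransGen.single
        (show t ib = s oa by rw [hib, hoa]))
      have : le' (φ1 oa) (φ1 ib) := htrans _ _ _ hy3 hy2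
      exact hro.2 (hφ1 (hanti _ _ hro.1 this))
    · apply Set.Subset.antisymm
      · rintro y ⟨a, (ha | ha), b, (hb | hb), h1, h2⟩
        · exact Or.inl ⟨a, ha, b, hb, h1, h2⟩
        · -- a ∈ I(v), b ∈ O(v) : the interesting case
          by_cases hya : y = a
          · exact Or.inl ⟨a, ha, a, ha, hya ▸ hrefl _, hya ▸ hrefl _⟩
          by_cases hyb : y = b
          · exact Or.inr ⟨b, hb, b, hb, hyb ▸ hrefl _, hyb ▸ hrefl _⟩
          have hne1 : φ1 a ≠ φ1 y := fun hh => hya (hφ1 hh).symm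
          have hne2 : φ1 y ≠ φ1 b := fun hh => hyb (hφ1 hh)
          have hreach : Relation.TransGen (fun a b => t' a = s' b) (φ1 a) (φ1 b) :=
            Relation.TransGen.single (by rw [ht a, hs b, ha, hb])
          rcases hP2k (φ1 a) (φ1 y) (φ1 b) ⟨h1, hne1⟩ ⟨h2, hne2⟩ hreach with hc | hc
          · obtain ⟨u, hau, huy⟩ := Relation.TransGen.head'_iff.mp hc
            have hsu : s' u = φ0 v := by rw [← hau, ht a, ha]
            have h3 : le' u (φ1 y) := by
              rcases Relation.reflTransGen_iff_eq_or_transGen.mp huy with h' | h'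
              · rw [h']; exact hrefl _
              · exact (hU1k _ _ h').1
            obtain ⟨z, hz, hzmin⟩ := hminO v ⟨b, hb⟩
            exact Or.inr ⟨z, hz, b, hb, htrans _ _ _ (hzmin u hsu) h3, h2⟩
          · obtain ⟨g, hyg, hgb⟩ := Relation.TransGen.tail'_iff.mp hc
            have htg : t' g = φ0 v := by rw [hgb, hs b, hb]
            have h3 : le' (φ1 y) g := by
              rcases Relation.reflTransGen_iff_eq_or_transGen.mp hyg with h' | h'
              · rw [← h']; exact hrefl _
              · exact (hU1k _ _ h').1
            obtain ⟨z, hz, hzmax⟩ := hmaxI v ⟨a, ha⟩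
            exact Or.inl ⟨a, ha, z, hz, h1, htrans _ _ _ h3 (hzmax g htg)⟩
        · -- a ∈ O(v), b ∈ I(v) : impossible unless degenerate
          exfalso
          have hro := hU1G b a (Relation.TransGen.single
            (show t b = s a by rw [hb, ha]))
          have : le' (φ1 a) (φ1 b) := htrans _ _ _ h1 h2
          exact hro.2 (hφ1 (hanti _ _ hro.1 this))
        · exact Or.inr ⟨a, ha, b, hb, h1, h2⟩
      · rintro y (⟨a, ha, b, hb, h1, h2⟩ | ⟨a, ha, b, hb, h1, h2⟩)
        · exact ⟨a, Or.inl ha, b, Or.inl hb, h1, h2⟩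
        · exact ⟨a, Or.inr ha, b, Or.inr hb, h1, h2⟩
  · -- U3
    intro v1 v2
    constructor
    · rintro ⟨e, hev1, i1, hi1, i2, hi2, hle1, hle2⟩
      by_cases hvv : v1 = v2
      · subst hvv; exact Set.Subset.refl _
      have hφne : φ0 v1 ≠ φ0 v2 := fun h => hvv (hφ0 h)
      obtain ⟨o1, ho1⟩ := hOne' v1
      obtain ⟨o, ho⟩ := hOne' v2
      obtain ⟨⟨g, hg, hup⟩, hlow⟩ := key_bound s' t' le' htot htrans hanti hU1k hP2k
        hφne ho1 ho (show t' (φ1 e) = φ0 v1 by rw [ht e, hev1])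
        (show t' (φ1 i1) = φ0 v2 by rw [ht i1, hi1])
        (show t' (φ1 i2) = φ0 v2 by rw [ht i2, hi2]) hle1 hle2
      obtain ⟨zm, hzm, hzmin⟩ := hminI v2 ⟨i1, hi1⟩
      obtain ⟨zM, hzM, hzmax⟩ := hmaxI v2 ⟨i1, hi1⟩
      rintro y ⟨f1, hf1, f2, hf2, hy1, hy2⟩
      refine ⟨zm, hzm, zM, hzM, ?_, ?_⟩
      · exact htrans _ _ _ (hlow (φ1 zm) (by rw [ht zm, hzm])
          (fun x hx => hzmin x hx) (φ1 f1) (by rw [ht f1, hf1])) hy1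
      · exact htrans _ _ _ hy2 (htrans _ _ _
          (hup (φ1 f2) (by rw [ht f2, hf2])).1 (hzmax g hg))
    · rintro ⟨e, hev1, i1, hi1, i2, hi2, hle1, hle2⟩
      by_cases hvv : v1 = v2
      · subst hvv; exact Set.Subset.refl _
      have hφne : φ0 v1 ≠ φ0 v2 := fun h => hvv (hφ0 h)
      -- reversed graph
      have hconv : ∀ a b : E', Relation.TransGen (fun x y => s' x = t' y) a b →
          Relation.TransGen (fun x y => t' x = s' y) b a := fun a b h =>
        Relation.transGen_swap.mp (Relation.TransGen.mono (fun x y hxy => hxy.symm) _ _ h)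
      have hconv' : ∀ a b : E', Relation.TransGen (fun x y => t' x = s' y) a b →
          Relation.TransGen (fun x y => s' x = t' y) b a := fun a b h =>
        Relation.TransGen.mono (fun x y hxy => hxy.symm) _ _ (Relation.transGen_swap.mpr h)
      have hU1r : ∀ e1 e2, Relation.TransGen (fun x y => s' x = t' y) e1 e2 →
          le' e2 e1 ∧ e1 ≠ e2 := by
        intro e1 e2 h
        have h' := hU1k _ _ (hconv _ _ h)
        exact ⟨h'.1, h'.2.symm⟩
      have hP2r : ∀ e1 e2 e3, (le' e2 e1 ∧ e1 ≠ e2) → (le' e3 e2 ∧ e2 ≠ e3) →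
          Relation.TransGen (fun x y => s' x = t' y) e1 e3 →
          Relation.TransGen (fun x y => s' x = t' y) e1 e2 ∨
          Relation.TransGen (fun x y => s' x = t' y) e2 e3 := by
        intro e1 e2 e3 h12 h23 h13
        rcases hP2k e3 e2 e1 ⟨h23.1, h23.2.symm⟩ ⟨h12.1, h12.2.symm⟩
          (hconv _ _ h13) with hc | hc
        · exact Or.inr (hconv' _ _ hc)
        · exact Or.inl (hconv' _ _ hc)
      obtain ⟨o1, ho1⟩ := hIne' v1
      obtain ⟨o, ho⟩ := hIne' v2
      obtain ⟨⟨g, hg, hup⟩, hlow⟩ := key_bound t' s' (fun a b => le' b a)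
        (fun a b => htot b a) (fun a b c h1 h2 => htrans c b a h2 h1)
        (fun a b h1 h2 => hanti a b h2 h1) hU1r hP2r
        hφne ho1 ho (show s' (φ1 e) = φ0 v1 by rw [hs e, hev1])
        (show s' (φ1 i2) = φ0 v2 by rw [hs i2, hi2])
        (show s' (φ1 i1) = φ0 v2 by rw [hs i1, hi1]) hle2 hle1
      obtain ⟨zm, hzm, hzmin⟩ := hminO v2 ⟨i1, hi1⟩
      obtain ⟨zM, hzM, hzmax⟩ := hmaxO v2 ⟨i1, hi1⟩
      rintro y ⟨f1, hf1, f2, hf2, hy1, hy2⟩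
      refine ⟨zm, hzm, zM, hzM, ?_, ?_⟩
      · exact htrans _ _ _ (htrans _ _ _ (hzmin g hg)
          (hup (φ1 f1) (by rw [hs f1, hf1])).1) hy1
      · exact htrans _ _ _ hy2 (hlow (φ1 zM) (by rw [hs zM, hzM])
          (fun x hx => hzmax x hx) (φ1 f2) (by rw [hs f2, hf2]))
end
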